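/- The polynomial equation U_{n−1}(x) + i U_{n−2}(x) − i T_n(x) + T_{n−1}(x) = 0 has no real roots. -/
import Mathlib


open Polynomial Polynomial.Chebyshev Complex

/-- Pell-type identity for Chebyshev polynomials, together with the cross-term identity. -/
theorem pell_aux (n : ℤ) :
    (T ℝ n) ^ 2 - (X ^ 2 - 1) * (U ℝ (n - 1)) ^ 2 = 1 ∧
    T ℝ (n + 1) * T ℝ n - (X ^ 2 - 1) * U ℝ n * U ℝ (n - 1) = X := by
  induction n using Polynomial.Chebyshev.induct with
  | zero =>
    constructor
    · norm_num [U_neg_one]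
    · norm_num
  | one =>
    constructor
    · norm_num [T_two, U_zero]
    · norm_num [T_two, U_one, U_zero]; ring
  | add_two n ih1 ih2 =>
    obtain ⟨p1, q1⟩ := ih1
    obtain ⟨p0, q0⟩ := ih2
    have hT := T_add_two ℝ n
    have hT' := T_add_two ℝ (n + 1)
    have hU := U_add_two ℝ ((n : ℤ) - 1)
    have hU' := U_add_two ℝ (n : ℤ)
    have pnew : (T ℝ ((n : ℤ) + 2)) ^ 2 - (X ^ 2 - 1) * (U ℝ ((n : ℤ) + 2 - 1)) ^ 2 = 1 := by
      linear_combination (norm := ring_nf)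
        (T ℝ ((n : ℤ) + 2) + 2 * X * T ℝ ((n : ℤ) + 1) - T ℝ n) * hT
        - (X ^ 2 - 1) * (U ℝ ((n : ℤ) + 1) + 2 * X * U ℝ n - U ℝ ((n : ℤ) - 1)) * hU
        + 4 * X ^ 2 * p1 - 4 * X * q0 + p0
    refine ⟨pnew, ?_⟩
    linear_combination (norm := ring_nf)
      T ℝ ((n : ℤ) + 2) * hT' - (X ^ 2 - 1) * U ℝ ((n : ℤ) + 1) * hU' + 2 * X * pnew - q1
  | neg_add_one n ih1 ih2 =>
    obtain ⟨p0, q0⟩ := ih1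
    obtain ⟨p1, q1⟩ := ih2
    have hT := T_sub_one ℝ (-(n : ℤ))
    have hU := U_sub_two ℝ (-(n : ℤ))
    constructor
    · linear_combination (norm := ring_nf)
        (T ℝ (-(n : ℤ) - 1) + 2 * X * T ℝ (-(n : ℤ)) - T ℝ (-(n : ℤ) + 1)) * hT
        - (X ^ 2 - 1) * (U ℝ (-(n : ℤ) - 2) + 2 * X * U ℝ (-(n : ℤ) - 1) - U ℝ (-(n : ℤ))) * hU
        + 4 * X ^ 2 * p0 - 4 * X * q0 + p1
    · linear_combination (norm := ring_nf)
        T ℝ (-(n : ℤ)) * hT - (X ^ 2 - 1) * U ℝ (-(n : ℤ) - 1) * hU + 2 * X * p0 - q0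

/-- The equation `U_{n-1}(x) + i U_{n-2}(x) - i T_n(x) + T_{n-1}(x) = 0` has no real
roots. -/
theorem no_real_roots (n : ℕ) (hn : 1 ≤ n) (x : ℝ) :
    (U ℂ ((n : ℤ) - 1)).eval (x : ℂ) + I * (U ℂ ((n : ℤ) - 2)).eval (x : ℂ)
      - I * (T ℂ n).eval (x : ℂ) + (T ℂ ((n : ℤ) - 1)).eval (x : ℂ) ≠ 0 := by
  have hU : ∀ k : ℤ, (U ℂ k).eval (x : ℂ) = (((U ℝ k).eval x : ℝ) : ℂ) := by
    intro k
    rw [← map_U (algebraMap ℝ ℂ) k, ← Complex.coe_algebraMap, eval_map, eval₂_at_apply]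
  have hT : ∀ k : ℤ, (T ℂ k).eval (x : ℂ) = (((T ℝ k).eval x : ℝ) : ℂ) := by
    intro k
    rw [← map_T (algebraMap ℝ ℂ) k, ← Complex.coe_algebraMap, eval_map, eval₂_at_apply]
  set u := (U ℝ ((n : ℤ) - 1)).eval x with hu
  set v := (U ℝ ((n : ℤ) - 2)).eval x with hv
  set tn := (T ℝ (n : ℤ)).eval x with htn
  set tn1 := (T ℝ ((n : ℤ) - 1)).eval x with htn1
  intro h
  rw [hU, hU, hT, hT] at h
  have hre : u + tn1 = 0 := by
    have h' := congrArg Complex.re h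
    simp only [add_re, sub_re, mul_re, I_re, I_im, ofReal_re, ofReal_im, zero_re, zero_mul,
      mul_zero, one_mul, neg_zero, sub_zero, zero_add, add_zero, zero_sub, mul_one] at h'
    simp only [← hu, ← hv, ← htn, ← htn1] at h'
    linarith
  have him : v - tn = 0 := by
    have h' := congrArg Complex.im h
    simp only [add_im, sub_im, mul_im, I_re, I_im, ofReal_re, ofReal_im, zero_im, zero_mul,
      mul_zero, one_mul, neg_zero, sub_zero, zero_add, add_zero, zero_sub, mul_one] at h'
    simp only [← hu, ← hv, ← htn, ← htn1] at h'
    linarith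
  -- express tn, tn1 in terms of u, v
  have e1 : tn = x * u - v := by
    have h1 := congrArg (Polynomial.eval x) (T_eq_U_sub_X_mul_U ℝ (n : ℤ))
    have h2 := congrArg (Polynomial.eval x) (U_eq ℝ (n : ℤ))
    simp only [eval_sub, eval_mul, eval_X, eval_ofNat] at h1 h2
    rw [htn, hu, hv, h1, h2]
    ring
  have e2 : tn1 = u - x * v := by
    have h1 := congrArg (Polynomial.eval x) (T_eq_U_sub_X_mul_U ℝ ((n : ℤ) - 1))
    rw [show (n : ℤ) - 1 - 1 = (n : ℤ) - 2 from by ring] at h1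
    simp only [eval_sub, eval_mul, eval_X] at h1
    rw [htn1, hu, hv, h1]
  -- Pell identities evaluated at x
  have p1 : tn ^ 2 - (x ^ 2 - 1) * u ^ 2 = 1 := by
    have h1 := congrArg (Polynomial.eval x) (pell_aux (n : ℤ)).1
    simp only [eval_sub, eval_mul, eval_pow, eval_one, eval_X, eval_ofNat] at h1
    rw [htn, hu]
    exact h1
  have p2 : tn1 ^ 2 - (x ^ 2 - 1) * v ^ 2 = 1 := by
    have h1 := congrArg (Polynomial.eval x) (pell_aux ((n : ℤ) - 1)).1
    rw [show (n : ℤ) - 1 - 1 = (n : ℤ) - 2 from by ring] at h1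
    simp only [eval_sub, eval_mul, eval_pow, eval_one, eval_X, eval_ofNat] at h1
    rw [htn1, hv]
    exact h1
  have h1 : 2 * u = x * v := by rw [e2] at hre; linarith
  have h2 : 2 * v = x * u := by rw [e1] at him; linarith
  have h3 : u ^ 2 + v ^ 2 - 2 * x * u * v = 1 := by rw [e1] at p1; nlinarith [p1]
  have h4 : 2 * x * u * v = 4 * u ^ 2 := by nlinarith [h1]
  have h5 : 2 * x * u * v = 4 * v ^ 2 := by nlinarith [h2]
  nlinarith [h3, h4, h5, sq_nonneg u, sq_nonneg v]
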